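/- arXiv:1509.03754 — 3 statements merged into one kernel-verified Lean document; each statement's English description precedes it below -/
import Mathlib

section
/- Let Δ be a thin pure simplicial complex of rank n and δ a permutation of {0,...,n-1}. For a flag F of Δ with i-face X_i, consider the zigzag Z in the flag complex 𝔉(Δ) defined by the vertex sequence X_{δ(0)}, X_{δ(1)}, ..., X_{δ(n-1)}. Then the 0-shadow of Z is the sequence Y_{kn+i} (k ∈ ℕ, 0 ≤ i ≤ n-1) where Y_{kn+i} is the δ(i)-face of the flag T_δ^k applied to F composed with the partial products σ_{δ(i)}∘...∘σ_{δ(0)}; consequently the length of Z equals n·l, where l is the length of the δ-zigzag {T_δ^k(F)} with T_δ = σ_{δ(n-1)}∘...∘σ_{δ(0)}. -/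
open scoped Classical

variable {V : Type*}

/-- `C` is a facet (maximal face) of a pure rank-`n` complex: a face with `n` vertices. -/
def IsFacet (n : ℕ) (faces : Finset V → Prop) (C : Finset V) : Prop :=
  faces C ∧ C.card = n

/-- `faces` describes a thin pure simplicial complex of rank `n` over the vertex set `V`:
it is downward closed, every singleton is a face, every face has at most `n` vertices and is
contained in a facet, and every ridge (face with `n - 1` vertices) lies in exactly two facets. -/
def IsThinComplex (n : ℕ) (faces : Finset V → Prop) : Prop :=
  (∀ v : V, faces {v}) ∧
  (∀ ⦃X Y : Finset V⦄, faces X → Y ⊆ X → faces Y) ∧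
  (∀ ⦃X : Finset V⦄, faces X → X.card ≤ n) ∧
  (∀ ⦃X : Finset V⦄, faces X → ∃ C : Finset V, IsFacet n faces C ∧ X ⊆ C) ∧
  (∀ ⦃R : Finset V⦄, faces R → R.card = n - 1 →
    {C : Finset V | IsFacet n faces C ∧ R ⊆ C}.ncard = 2)

/-- A flag, encoded by the ordered vertex sequence `x_0, …, x_{n-1}` determining it:
the chain of faces is `{x_0} ⊂ {x_0,x_1} ⊂ … ⊂ {x_0,…,x_{n-1}}`, the top being a facet. -/
def IsFlag (n : ℕ) (faces : Finset V → Prop) (F : List V) : Prop :=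
  F.length = n ∧ F.Nodup ∧ faces F.toFinset

/-- `G = T(F)` for the zigzag operator `T = σ_{n-1} ∘ ⋯ ∘ σ_0`: if `F` is determined by the
vertex sequence `x_0, x_1, …, x_{n-1}`, then `T(F)` is determined by `x_1, …, x_{n-1}, y` with
`y ≠ x_0`. -/
def TStep (n : ℕ) (faces : Finset V → Prop) (F G : List V) : Prop :=
  IsFlag n faces F ∧ IsFlag n faces G ∧
    ∃ y : V, G = F.tail ++ [y] ∧ F.head? ≠ some y

/-- A zigzag of length `l`: the orbit `F, T F, T² F, …` of the operator `T` on flags, recorded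
as the sequence `i ↦ Tⁱ F`; it is `l`-periodic with `l` the minimal period. -/
def IsZigzag (n : ℕ) (faces : Finset V → Prop) (l : ℕ) (F : ℕ → List V) : Prop :=
  0 < l ∧ (∀ i : ℕ, TStep n faces (F i) (F (i + 1))) ∧ (∀ i : ℕ, F (i + l) = F i) ∧
    ∀ m : ℕ, 0 < m → (∀ i : ℕ, F (i + m) = F i) → l ≤ m

/-- The set of flags of a zigzag together with those of its reverse zigzag; two zigzags are
identified (a zigzag is identified with its reverse, and with its cyclic shifts) exactly when
these sets coincide. -/
def ZigzagClass (F : ℕ → List V) : Set (List V) :=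
  Set.range F ∪ Set.range fun i => (F i).reverse

/-- `G = σ_i(F)`: the flag `G` has the same `j`-faces as `F` for all `j ≠ i`, and a different
`i`-face (the `j`-face of the flag with vertex sequence `F` is `(F.take (j+1)).toFinset`). -/
def SigmaStep (n : ℕ) (faces : Finset V → Prop) (i : ℕ) (F G : List V) : Prop :=
  IsFlag n faces F ∧ IsFlag n faces G ∧
    (∀ j : ℕ, j < n → j ≠ i → (G.take (j + 1)).toFinset = (F.take (j + 1)).toFinset) ∧
    (G.take (i + 1)).toFinset ≠ (F.take (i + 1)).toFinset

/-- `G = T_δ(F)` where `T_δ = σ_{δ(n-1)} ∘ ⋯ ∘ σ_{δ(0)}`. -/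
def TDeltaStep (n : ℕ) (faces : Finset V → Prop) (δ : Equiv.Perm (Fin n))
    (F G : List V) : Prop :=
  ∃ c : ℕ → List V, c 0 = F ∧ c n = G ∧
    ∀ i : Fin n, SigmaStep n faces (δ i) (c i) (c (i + 1))

/-- A generalized zigzag (δ-zigzag) of length `l`: the orbit of `T_δ` on flags. -/
def IsGenZigzag (n : ℕ) (faces : Finset V → Prop) (δ : Equiv.Perm (Fin n)) (l : ℕ)
    (F : ℕ → List V) : Prop :=
  0 < l ∧ (∀ i : ℕ, TDeltaStep n faces δ (F i) (F (i + 1))) ∧ (∀ i : ℕ, F (i + l) = F i) ∧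
    ∀ m : ℕ, 0 < m → (∀ i : ℕ, F (i + m) = F i) → l ≤ m

/-- Adjacency in the facet-adjacency graph `Γ_{n-1}(Δ)`: two distinct facets meeting in a ridge. -/
def FacetAdj (n : ℕ) (faces : Finset V → Prop) (C D : Finset V) : Prop :=
  IsFacet n faces C ∧ IsFacet n faces D ∧ C ≠ D ∧ (C ∩ D).card = n - 1

/-- `p 0, p 1, …, p m` is a path in the facet-adjacency graph. -/
def IsFacetPath (n : ℕ) (faces : Finset V → Prop) (m : ℕ) (p : ℕ → Finset V) : Prop :=
  ∀ i : ℕ, i < m → FacetAdj n faces (p i) (p (i + 1))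

/-- The path distance in the facet-adjacency graph `Γ_{n-1}(Δ)`. -/
noncomputable def facetDist (n : ℕ) (faces : Finset V → Prop) (X Y : Finset V) : ℕ :=
  sInf {m : ℕ | ∃ p : ℕ → Finset V, p 0 = X ∧ p m = Y ∧ IsFacetPath n faces m p}

/-- The complex is a chamber complex: the facet-adjacency graph is connected. -/
def ChamberConnected (n : ℕ) (faces : Finset V → Prop) : Prop :=
  ∀ C D : Finset V, IsFacet n faces C → IsFacet n faces D →
    ∃ (m : ℕ) (p : ℕ → Finset V), p 0 = C ∧ p m = D ∧ IsFacetPath n faces m p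

/-- Faces of the flag complex `𝔉(Δ)`: sets of nonempty faces of `Δ` that form a chain. -/
def flagCplxFaces (faces : Finset V → Prop) (S : Finset (Finset V)) : Prop :=
  (∀ X ∈ S, faces X ∧ X.Nonempty) ∧ ∀ X ∈ S, ∀ Y ∈ S, X ⊆ Y ∨ Y ⊆ X



lemma take_toFinset_card (F : List V) (hN : F.Nodup) {j : ℕ} (hj : j ≤ F.length) :
    (F.take j).toFinset.card = j := by
  rw [List.toFinset_card_of_nodup (hN.sublist (List.take_sublist j F))]
  simpa using hj

lemma take_toFinset_subset (F : List V) {a b : ℕ} (hab : a ≤ b) :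
    (F.take a).toFinset ⊆ (F.take b).toFinset := by
  intro x hx
  rw [List.mem_toFinset] at hx ⊢
  have : F.take a = (F.take b).take a := by rw [List.take_take, min_eq_left hab]
  rw [this] at hx
  exact List.take_subset _ _ hx

lemma take_succ_get (F : List V) {j : ℕ} (hj : j < F.length) :
    F.take (j+1) = F.take j ++ [F.get ⟨j, hj⟩] := by
  rw [List.take_succ]
  congr 1
  simp [List.getElem?_eq_getElem hj]

lemma take_succ_toFinset (F : List V) {j : ℕ} (hj : j < F.length) :
    (F.take (j+1)).toFinset = insert (F.get ⟨j, hj⟩) (F.take j).toFinset := by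
  rw [take_succ_get F hj, List.toFinset_append, Finset.insert_eq, Finset.union_comm]
  rfl

lemma get_not_mem_take (F : List V) (hN : F.Nodup) {j : ℕ} (hj : j < F.length) :
    F.get ⟨j, hj⟩ ∉ (F.take j).toFinset := by
  intro hx
  rw [List.mem_toFinset] at hx
  have h1 : (F.take (j+1)).Nodup := hN.sublist (List.take_sublist _ F)
  rw [take_succ_get F hj] at h1
  rcases List.nodup_append'.mp h1 with ⟨-, -, hd⟩
  exact hd hx (by simp)

lemma prefix_ext {n : ℕ} (F G : List V) (hF : F.length = n) (hG : G.length = n)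
    (hNF : F.Nodup) (hNG : G.Nodup)
    (h : ∀ j < n, (F.take (j+1)).toFinset = (G.take (j+1)).toFinset) : F = G := by
  have hall : ∀ j ≤ n, (F.take j).toFinset = (G.take j).toFinset := by
    intro j hj
    cases j with
    | zero => simp
    | succ j => exact h j (by omega)
  apply List.ext_get (by rw [hF, hG])
  intro j hj hj'
  have hjn : j < n := hF ▸ hj
  have h1 := take_succ_toFinset F hj
  have h2 := take_succ_toFinset G hj'
  have key : insert (F.get ⟨j, hj⟩) (F.take j).toFinset
      = insert (G.get ⟨j, hj'⟩) (F.take j).toFinset := by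
    rw [← h1, hall j (by omega), hall (j+1) (by omega), h2]
  have : F.get ⟨j, hj⟩ ∈ insert (G.get ⟨j, hj'⟩) (F.take j).toFinset := by
    rw [← key]; exact Finset.mem_insert_self _ _
  rcases Finset.mem_insert.mp this with h' | h'
  · exact h'
  · exact absurd h' (get_not_mem_take F hNF hj)

lemma sigma_unique {n : ℕ} {faces : Finset V → Prop} (hΔ : IsThinComplex n faces)
    {j : ℕ} (hj : j < n) {F G G' : List V}
    (h1 : SigmaStep n faces j F G) (h2 : SigmaStep n faces j F G') : G = G' := by
  obtain ⟨hFf, hGf, hsame, hdiff⟩ := h1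
  obtain ⟨-, hG'f, hsame', hdiff'⟩ := h2
  obtain ⟨hFlen, hFnd, hFface⟩ := hFf
  obtain ⟨hGlen, hGnd, hGface⟩ := hGf
  obtain ⟨hG'len, hG'nd, hG'face⟩ := hG'f
  -- the (j-1)-prefix of any candidate agrees with that of F
  have hAG : ∀ H : List V, H.length = n →
      (∀ k, k < n → k ≠ j → (H.take (k+1)).toFinset = (F.take (k+1)).toFinset) →
      (F.take j).toFinset ⊆ (H.take (j+1)).toFinset := by
    intro H hHlen hs
    rcases Nat.eq_zero_or_pos j with hj0 | hj0
    · subst hj0; simp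
    · have : (H.take j).toFinset = (F.take j).toFinset := by
        have := hs (j-1) (by omega) (by omega)
        simpa [Nat.sub_add_cancel hj0] using this
      rw [← this]
      exact take_toFinset_subset H (by omega)
  have key : (G.take (j+1)).toFinset = (G'.take (j+1)).toFinset := by
    rcases Nat.lt_or_ge (j+1) n with hjn | hjn
    · -- intermediate rank: pure combinatorics
      set B := (F.take (j+2)).toFinset with hB
      set v₀ := F.get ⟨j, by omega⟩ with hv
      have hv₀B : v₀ ∈ B := by
        have : v₀ ∈ (F.take (j+1)).toFinset := by
          rw [take_succ_toFinset F (by omega)]; exact Finset.mem_insert_self _ _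
        exact take_toFinset_subset F (by omega) this
      have hBcard : B.card = j + 2 := take_toFinset_card F hFnd (by omega)
      have main : ∀ H : List V, H.length = n → H.Nodup →
          (∀ k, k < n → k ≠ j → (H.take (k+1)).toFinset = (F.take (k+1)).toFinset) →
          (H.take (j+1)).toFinset ≠ (F.take (j+1)).toFinset →
          (H.take (j+1)).toFinset = B.erase v₀ := by
        intro H hHlen hHnd hs hd
        set X := (H.take (j+1)).toFinset with hX
        have hXcard : X.card = j + 1 := take_toFinset_card H hHnd (by omega)
        have hXB : X ⊆ B := by
          rw [hB, ← hs (j+1) hjn (by omega)]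
          exact take_toFinset_subset H (by omega)
        have hAX : (F.take j).toFinset ⊆ X := hAG H hHlen hs
        have hv₀X : v₀ ∉ X := by
          intro hmem
          apply hd
          symm
          apply Finset.eq_of_subset_of_card_le
          · rw [take_succ_toFinset F (show j < F.length by omega)]
            exact Finset.insert_subset hmem hAX
          · rw [hXcard, take_toFinset_card F hFnd (show j + 1 ≤ F.length by omega)]
        apply Finset.eq_of_subset_of_card_le (Finset.subset_erase.mpr ⟨hXB, hv₀X⟩)
        rw [Finset.card_erase_of_mem hv₀B, hBcard, hXcard]
        omega
      rw [main G hGlen hGnd hsame hdiff, main G' hG'len hG'nd hsame' hdiff']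
    · -- top rank: thinness
      have hjn' : j + 1 = n := by omega
      have hA_face : faces (F.take j).toFinset := by
        apply hΔ.2.1 hFface
        intro x hx
        rw [List.mem_toFinset] at hx ⊢
        exact List.take_subset _ _ hx
      have hAcard : (F.take j).toFinset.card = n - 1 := by
        rw [take_toFinset_card F hFnd (by omega)]; omega
      have h2card := hΔ.2.2.2.2 hA_face hAcard
      obtain ⟨a, b, hab, hS⟩ := Set.ncard_eq_two.mp h2card
      have takeEq : ∀ H : List V, H.length = n → H.take (j+1) = H := by
        intro H hHlen
        rw [hjn', ← hHlen, List.take_length]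
      have memS : ∀ H : List V, H.length = n → H.Nodup → faces H.toFinset →
          (∀ k, k < n → k ≠ j → (H.take (k+1)).toFinset = (F.take (k+1)).toFinset) →
          (H.take (j+1)).toFinset ∈ ({a, b} : Set (Finset V)) := by
        intro H hHlen hHnd hHface hs
        rw [← hS]
        refine ⟨⟨?_, ?_⟩, hAG H hHlen hs⟩
        · rw [takeEq H hHlen]; exact hHface
        · rw [take_toFinset_card H hHnd (by omega)]; omega
      have hGmem := memS G hGlen hGnd hGface hsame
      have hG'mem := memS G' hG'len hG'nd hG'face hsame'
      have hFmem := memS F hFlen hFnd hFface (fun k _ _ => rfl)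
      simp only [Set.mem_insert_iff, Set.mem_singleton_iff] at hGmem hG'mem hFmem
      rcases hFmem with hF1 | hF1 <;> rcases hGmem with h | h <;> rcases hG'mem with h' | h' <;>
        (try (exact h.trans h'.symm)) <;>
        (exfalso; first
          | exact hdiff (h.trans hF1.symm)
          | exact hdiff' (h'.trans hF1.symm))
  apply prefix_ext G G' hGlen hG'len hGnd hG'nd
  intro k hk
  rcases eq_or_ne k j with rfl | hkj
  · exact key
  · rw [hsame k hk hkj, hsame' k hk hkj]

lemma flag_decomp {n : ℕ} {faces : Finset V → Prop} (hΔ : IsThinComplex n faces) (hn : 0 < n)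
    (S : List (Finset V)) (hS : IsFlag n (flagCplxFaces faces) S) :
    ∃ (F : List V) (ε : Equiv.Perm (Fin n)), IsFlag n faces F ∧
      S = List.ofFn fun i : Fin n => ((F.take ((ε i : ℕ) + 1)).toFinset) := by
  obtain ⟨hlen, hnd, hmem, hchain⟩ := hS
  set sg : Fin n → Finset V := fun i => S.get (Fin.cast hlen.symm i) with hsg
  have hsgmem : ∀ i, faces (sg i) ∧ (sg i).Nonempty := by
    intro i
    refine hmem _ ?_
    convert List.mem_toFinset.mpr (S.get_mem _) using 2
  have hcard_le : ∀ i, (sg i).card ≤ n := fun i => hΔ.2.2.1 (hsgmem i).1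
  have hcard_pos : ∀ i, 0 < (sg i).card := fun i =>
    Finset.card_pos.mpr (hsgmem i).2
  have hsginj : Function.Injective sg := by
    intro i i' h
    have := List.nodup_iff_injective_get.mp hnd h
    simpa [Fin.ext_iff] using this
  have hchain' : ∀ i i', sg i ⊆ sg i' ∨ sg i' ⊆ sg i := by
    intro i i'
    refine hchain _ ?_ _ ?_ <;>
      convert List.mem_toFinset.mpr (S.get_mem _) using 2
  have hcomp : ∀ i i', (sg i).card ≤ (sg i').card → sg i ⊆ sg i' := by
    intro i i' hle
    rcases hchain' i i' with h | h
    · exact h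
    · have := Finset.eq_of_subset_of_card_le h hle
      rw [this]
  set cardMap : Fin n → Fin n := fun i => ⟨(sg i).card - 1, by
    have := hcard_le i; have := hcard_pos i; omega⟩ with hcm
  have hcminj : Function.Injective cardMap := by
    intro i i' h
    simp only [hcm, Fin.mk.injEq] at h
    have hcc : (sg i).card = (sg i').card := by
      have := hcard_pos i; have := hcard_pos i'; omega
    exact hsginj (Finset.eq_of_subset_of_card_le (hcomp i i' hcc.le) hcc.ge)
  set ε : Equiv.Perm (Fin n) := Equiv.ofBijective cardMap
    (Finite.injective_iff_bijective.mp hcminj) with hε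
  have hεapp : ∀ i, (ε i : ℕ) = (sg i).card - 1 := fun i => rfl
  have hcard_eq : ∀ i, (sg i).card = (ε i : ℕ) + 1 := by
    intro i; have := hcard_pos i; rw [hεapp]; omega
  set D : Fin n → Finset V := fun j => sg (ε.symm j) with hD
  have hDcard : ∀ j, (D j).card = (j : ℕ) + 1 := by
    intro j; simp only [hD, hcard_eq, Equiv.apply_symm_apply]
  have hDmono : ∀ j j' : Fin n, (j : ℕ) ≤ (j' : ℕ) → D j ⊆ D j' := by
    intro j j' hle
    apply hcomp
    rw [hcard_eq, hcard_eq, Equiv.apply_symm_apply, Equiv.apply_symm_apply]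
    omega
  set P : Fin n → Finset V := fun j => if h : 0 < (j : ℕ) then
    D ⟨(j : ℕ) - 1, by omega⟩ else ∅ with hP
  have hPsucc : ∀ (j : ℕ) (hj : j + 1 < n), P ⟨j+1, hj⟩ = D ⟨j, by omega⟩ := by
    intro j hj
    simp only [hP]
    rw [dif_pos (Nat.succ_pos j)]
    congr 1
  have hP0 : ∀ (hj : 0 < n), P ⟨0, hj⟩ = ∅ := by
    intro hj
    simp only [hP]
    rw [dif_neg (by exact Nat.lt_irrefl 0)]
  have hPD : ∀ j : Fin n, P j ⊆ D j := by
    intro j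
    rcases j with ⟨jv, hjv⟩
    cases jv with
    | zero => rw [hP0 hjv]; exact Finset.empty_subset _
    | succ m => rw [hPsucc m hjv]; exact hDmono _ _ (by exact Nat.le_succ m)
  have hPcard : ∀ j : Fin n, (P j).card = (j : ℕ) := by
    intro j
    rcases j with ⟨jv, hjv⟩
    cases jv with
    | zero => rw [hP0 hjv]; rfl
    | succ m => rw [hPsucc m hjv, hDcard]
  have hne : ∀ j, (D j \ P j).Nonempty := by
    intro j
    rw [Finset.sdiff_nonempty]
    intro hsub
    have := Finset.card_le_card hsub
    rw [hDcard, hPcard] at this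
    omega
  set g : Fin n → V := fun j => (hne j).choose with hg
  have hgmem : ∀ j, g j ∈ D j ∧ g j ∉ P j := by
    intro j
    have := (hne j).choose_spec
    rw [Finset.mem_sdiff] at this
    exact this
  have hDins : ∀ j, D j = insert (g j) (P j) := by
    intro j
    symm
    apply Finset.eq_of_subset_of_card_le
    · exact Finset.insert_subset (hgmem j).1 (hPD j)
    · rw [Finset.card_insert_of_notMem (hgmem j).2, hDcard, hPcard]
  set F : List V := List.ofFn g with hF
  have hFlen : F.length = n := by rw [hF, List.length_ofFn]
  have htake : ∀ (j : ℕ) (hj : j < n), (F.take (j+1)).toFinset = D ⟨j, hj⟩ := by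
    intro j
    induction j with
    | zero =>
      intro hj
      rw [take_succ_toFinset F (show 0 < F.length by rw [hFlen]; omega)]
      have hget : F.get ⟨0, by rw [hFlen]; omega⟩ = g ⟨0, hj⟩ := List.get_ofFn g _
      rw [hget, hDins ⟨0, hj⟩, hP0 hj]
      simp
    | succ j ih =>
      intro hj
      rw [take_succ_toFinset F (show j + 1 < F.length by rw [hFlen]; omega)]
      have hget : F.get ⟨j+1, by rw [hFlen]; omega⟩ = g ⟨j+1, hj⟩ := List.get_ofFn g _
      rw [hget, ih (by omega), hDins ⟨j+1, hj⟩, hPsucc j hj]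
  have hFtop : F.toFinset = D ⟨n-1, by omega⟩ := by
    have : F.take n = F := by rw [← hFlen, List.take_length]
    have h2 := htake (n-1) (by omega)
    rw [show n - 1 + 1 = n by omega, this] at h2
    exact h2
  have hFnd : F.Nodup := by
    rw [← List.dedup_eq_self]
    apply List.Sublist.eq_of_length (List.dedup_sublist F)
    have h1 : F.toFinset.card = F.dedup.length := List.card_toFinset F
    rw [hFtop, hDcard] at h1
    have h2 : n - 1 + 1 = F.dedup.length := h1
    rw [hFlen]
    omega
  refine ⟨F, ε, ⟨hFlen, hFnd, ?_⟩, ?_⟩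
  · rw [hFtop]
    exact (hsgmem _).1
  · apply List.ext_get (by simp [hlen])
    intro i h1 h2
    rw [List.get_ofFn]
    generalize hx : Fin.cast (List.length_ofFn) ⟨i, h2⟩ = x
    have hxi : (x : ℕ) = i := by rw [← hx]; rfl
    rw [htake _ (ε x).isLt, Fin.eta]
    simp only [hD, hsg, Equiv.symm_apply_apply]
    congr 1
    apply Fin.ext
    simp [hxi]

/-- The list of faces of the flag `F`, ordered by the permutation `ε`. -/
noncomputable def flagList (n : ℕ) (F : List V) (ε : Equiv.Perm (Fin n)) : List (Finset V) :=
  List.ofFn fun i : Fin n => ((F.take ((ε i : ℕ) + 1)).toFinset)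

lemma flagList_length (n : ℕ) (F : List V) (ε : Equiv.Perm (Fin n)) :
    (flagList n F ε).length = n := by simp [flagList]

lemma flagList_get? (n : ℕ) (F : List V) (ε : Equiv.Perm (Fin n)) (k : ℕ) (hk : k < n) :
    (flagList n F ε)[k]? = some ((F.take ((ε ⟨k, hk⟩ : ℕ) + 1)).toFinset) := by
  rw [flagList, List.getElem?_ofFn]
  simp [hk]

lemma flagList_head? {m : ℕ} (F : List V) (ε : Equiv.Perm (Fin (m+1))) :
    (flagList (m+1) F ε).head? = some ((F.take ((ε 0 : ℕ) + 1)).toFinset) := by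
  rw [flagList, List.ofFn_succ]
  rfl

lemma flagList_inj {n : ℕ} {F F' : List V} (hF : F.length = n) (hF' : F'.length = n)
    (hnd : F.Nodup) (hnd' : F'.Nodup) (ε : Equiv.Perm (Fin n))
    (h : flagList n F ε = flagList n F' ε) : F = F' := by
  apply prefix_ext F F' hF hF' hnd hnd'
  intro j hj
  have h1 := flagList_get? n F ε ((ε.symm ⟨j, hj⟩ : Fin n) : ℕ) (ε.symm ⟨j, hj⟩).isLt
  have h2 := flagList_get? n F' ε ((ε.symm ⟨j, hj⟩ : Fin n) : ℕ) (ε.symm ⟨j, hj⟩).isLt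
  rw [h, h2] at h1
  have h3 := Option.some.inj h1
  rw [Fin.eta, Equiv.apply_symm_apply] at h3
  exact h3.symm

lemma tstep_decomp {n : ℕ} {faces : Finset V → Prop} (hΔ : IsThinComplex n faces) (hn : 0 < n)
    {F : List V} {ε : Equiv.Perm (Fin n)} (hF : IsFlag n faces F)
    {S' : List (Finset V)} (hT : TStep n (flagCplxFaces faces) (flagList n F ε) S') :
    ∃ F' : List V, SigmaStep n faces ((ε ⟨0, hn⟩ : ℕ)) F F' ∧
      S' = flagList n F' (ε * finRotate n) := by
  obtain ⟨m, rfl⟩ : ∃ m, n = m + 1 := ⟨n - 1, by omega⟩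
  simp only [Fin.mk_zero]
  obtain ⟨hSflag, hS'flag, y, hy, hne⟩ := hT
  obtain ⟨F'', ε'', hF''flag, hS'eq⟩ := flag_decomp hΔ hn S' hS'flag
  rw [← flagList] at hS'eq
  have hFlen := hF.1
  have hFnd := hF.2.1
  have hF''len := hF''flag.1
  have hF''nd := hF''flag.2.1
  -- tail structure
  have htail : (flagList (m+1) F ε).tail
      = List.ofFn (fun i : Fin m => ((F.take ((ε i.succ : ℕ) + 1)).toFinset)) := by
    rw [flagList, List.ofFn_succ]
    rfl
  -- the get? facts for S'
  have h2 : ∀ k : ℕ, (hk : k < m) → S'[k]?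
      = some ((F.take ((ε ⟨k + 1, by omega⟩ : ℕ) + 1)).toFinset) := by
    intro k hk
    rw [hy, htail, List.getElem?_append_left (by simpa using hk), List.getElem?_ofFn]
    simp only [dif_pos hk]
    rfl
  have h3 : S'[m]? = some y := by
    rw [hy, htail]
    have h4 := List.getElem?_concat_length (l :=
      List.ofFn (fun i : Fin m => ((F.take ((ε i.succ : ℕ) + 1)).toFinset))) (a := y)
    simpa using h4
  -- identification of ε''
  have hee : ∀ k : Fin (m+1), (hk : (k : ℕ) < m) → ε'' k = ε ⟨(k : ℕ) + 1, by omega⟩ := by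
    intro k hk
    set k1 : Fin (m+1) := ⟨(k : ℕ) + 1, by omega⟩ with hk1
    have ha := flagList_get? (m+1) F'' ε'' (k : ℕ) k.isLt
    rw [← hS'eq, h2 (k : ℕ) hk] at ha
    have hb : (F.take ((ε k1 : ℕ) + 1)).toFinset
        = (F''.take ((ε'' k : ℕ) + 1)).toFinset := Option.some.inj ha
    have hc : ((ε k1 : ℕ) + 1) = ((ε'' k : ℕ) + 1) := by
      calc ((ε k1 : ℕ) + 1)
          = ((F.take ((ε k1 : ℕ) + 1)).toFinset).card :=
            (take_toFinset_card F hFnd (by rw [hFlen]; exact Nat.succ_le_of_lt (Fin.isLt _))).symm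
        _ = ((F''.take ((ε'' k : ℕ) + 1)).toFinset).card := by rw [hb]
        _ = (ε'' k : ℕ) + 1 :=
            take_toFinset_card F'' hF''nd (by rw [hF''len]; exact Nat.succ_le_of_lt (Fin.isLt _))
    exact Fin.ext (by omega)
  have hlast : ε'' (Fin.last m) = ε 0 := by
    by_contra hne'
    set i := ε''.symm (ε 0) with hi
    have hiv : i ≠ Fin.last m := by
      intro h
      apply hne'
      rw [← h, hi, Equiv.apply_symm_apply]
    have him : (i : ℕ) < m := by
      have h1 := i.isLt
      rcases Nat.lt_or_ge (i : ℕ) m with h | h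
      · exact h
      · exfalso
        apply hiv
        apply Fin.ext
        show (i : ℕ) = m
        omega
    have h1 : ε'' i = ε ⟨(i : ℕ) + 1, by omega⟩ := hee i him
    have h2' : ε'' i = ε 0 := by rw [hi, Equiv.apply_symm_apply]
    have h3' : (⟨(i : ℕ) + 1, by omega⟩ : Fin (m+1)) = 0 := ε.injective (h1.symm.trans h2')
    have h4 := congrArg Fin.val h3'
    simp only [Fin.val_zero] at h4
    have h5 : (i : ℕ) + 1 = 0 := h4
    omega
  have hεε : ε'' = ε * finRotate (m+1) := by
    apply Equiv.ext
    intro k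
    rw [Equiv.Perm.mul_apply, finRotate_succ_apply]
    rcases Nat.lt_or_ge (k : ℕ) m with hk | hk
    · rw [hee k hk]
      congr 1
      apply Fin.ext
      show (k : ℕ) + 1 = ((k + 1 : Fin (m+1)) : ℕ)
      rw [Fin.val_add_one]
      split
      · next h =>
          exfalso
          rw [h] at hk
          simp [Fin.last] at hk
      · rfl
    · have hkm : k = Fin.last m := by
        apply Fin.ext
        show (k : ℕ) = m
        have := k.isLt
        omega
      rw [hkm, Fin.last_add_one, hlast]
  -- the sigma step
  refine ⟨F'', ⟨hF, hF''flag, ?_, ?_⟩, by rw [hS'eq, hεε]⟩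
  · intro j hj hjne
    set i := ε.symm ⟨j, hj⟩ with hi
    have hij : (ε i : ℕ) = j := by rw [hi, Equiv.apply_symm_apply]
    have hi0 : (i : ℕ) ≠ 0 := by
      intro h
      apply hjne
      rw [← hij]
      have h0 : i = 0 := Fin.ext (by simpa using h)
      rw [h0]
    have him : (i : ℕ) - 1 < m := by have := i.isLt; omega
    set k : Fin (m+1) := ⟨(i : ℕ) - 1, by omega⟩ with hk
    have hkm : (k : ℕ) < m := him
    have he := hee k hkm
    have hki : (⟨(k : ℕ) + 1, by omega⟩ : Fin (m+1)) = i := by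
      apply Fin.ext
      show (k : ℕ) + 1 = (i : ℕ)
      show (i : ℕ) - 1 + 1 = (i : ℕ)
      omega
    rw [hki] at he
    have ha := flagList_get? (m+1) F'' ε'' (k : ℕ) k.isLt
    rw [← hS'eq, h2 (k : ℕ) hkm] at ha
    have hb : (F.take ((ε ⟨(k : ℕ) + 1, by omega⟩ : ℕ) + 1)).toFinset
        = (F''.take ((ε'' k : ℕ) + 1)).toFinset := Option.some.inj ha
    rw [hki, he, hij] at hb
    exact hb.symm
  · have ha := flagList_get? (m+1) F'' ε'' m (by omega)
    rw [← hS'eq, h3] at ha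
    have hb : y = (F''.take ((ε'' (Fin.last m) : ℕ) + 1)).toFinset := Option.some.inj ha
    rw [hlast] at hb
    rw [← hb]
    intro hcon
    apply hne
    rw [flagList_head?, hcon]

open Fin.NatCast Fin.CommRing

lemma finRotate_pow_apply {m : ℕ} : ∀ (i : ℕ) (k : Fin (m+1)),
    ((finRotate (m+1)) ^ i) k = k + (i : Fin (m+1)) := by
  intro i
  induction i with
  | zero => intro k; simp
  | succ i ih =>
    intro k
    rw [pow_succ, Equiv.Perm.mul_apply, finRotate_succ_apply, ih]
    push_cast
    ring

lemma finRotate_pow_self {m : ℕ} : (finRotate (m+1)) ^ (m+1) = 1 := by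
  apply Equiv.ext
  intro k
  rw [finRotate_pow_apply]
  simp

lemma chain_flag {n : ℕ} {faces : Finset V → Prop} {δ : Equiv.Perm (Fin n)} {c : ℕ → List V}
    (hcs : ∀ i : Fin n, SigmaStep n faces (δ i) (c i) (c (↑i + 1)))
    (hn : 0 < n) : ∀ i : ℕ, i ≤ n → IsFlag n faces (c i) := by
  intro i hi
  rcases Nat.lt_or_ge i n with h | h
  · exact (hcs ⟨i, h⟩).1
  · have hflag := (hcs ⟨n-1, by omega⟩).2.1
    have hx : ((⟨n-1, by omega⟩ : Fin n) : ℕ) + 1 = i := by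
      show n - 1 + 1 = i
      omega
    exact (congrArg c hx) ▸ hflag

lemma chain_unchanged {n : ℕ} {faces : Finset V → Prop} {δ : Equiv.Perm (Fin n)} {c : ℕ → List V}
    (hcs : ∀ i : Fin n, SigmaStep n faces (δ i) (c i) (c (↑i + 1))) :
    ∀ (i : ℕ), i ≤ n → ∀ (j : ℕ), j < n → (∀ r : Fin n, (r : ℕ) < i → (δ r : ℕ) ≠ j) →
      ((c i).take (j+1)).toFinset = ((c 0).take (j+1)).toFinset := by
  intro i
  induction i with
  | zero => intro _ j _ _; rfl
  | succ i ih =>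
    intro hi j hj hr
    have hstep := (hcs ⟨i, by omega⟩).2.2.1 j hj
      (fun h => hr ⟨i, by omega⟩ (by show i < i + 1; omega) h.symm)
    exact hstep.trans (ih (by omega) j hj (fun r hri => hr r (by omega)))

/-- Let `F` be a flag of `Δ` with `i`-face `X_i` and `δ` a permutation of
`{0,…,n-1}`. The zigzag `Z` of the flag complex `𝔉(Δ)` through the vertex sequence
`X_{δ(0)}, …, X_{δ(n-1)}` has 0-shadow `Y_{kn+i} = ` the `δ(i)`-face of `T_δ^k(F)`, and its
length is `n·l`, where `l` is the length of the `δ`-zigzag `{T_δ^k(F)}` of `Δ`. -/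
theorem stmt14 [Fintype V] (n : ℕ) (faces : Finset V → Prop) (hΔ : IsThinComplex n faces)
    (δ : Equiv.Perm (Fin n)) (l : ℕ) (Fseq : ℕ → List V)
    (hgen : IsGenZigzag n faces δ l Fseq)
    (L : ℕ) (G : ℕ → List (Finset V)) (hG : IsZigzag n (flagCplxFaces faces) L G)
    (hG0 : G 0 = List.ofFn fun i : Fin n => ((Fseq 0).take ((δ i : ℕ) + 1)).toFinset) :
    L = n * l ∧ ∀ (k : ℕ) (i : Fin n),
      (G (k * n + (i : ℕ))).head? = some (((Fseq k).take ((δ i : ℕ) + 1)).toFinset) := by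
  obtain ⟨hl, hTd, hper, hmin⟩ := hgen
  obtain ⟨hL, hTs, hPer, hMin⟩ := hG
  have hn : 0 < n := by
    obtain ⟨h1, h2, y, hy, -⟩ := hTs 0
    have l2 := h2.1
    rw [hy] at l2
    have l1 := h1.1
    simp [List.length_append, List.length_tail] at l2
    omega
  obtain ⟨m, rfl⟩ : ∃ m, n = m + 1 := ⟨n - 1, by omega⟩
  choose c hc0 hcn hcs using hTd
  have hflag : ∀ k, ∀ i ≤ m + 1, IsFlag (m+1) faces (c k i) :=
    fun k => chain_flag (hcs k) hn
  have hFflag : ∀ k, IsFlag (m+1) faces (Fseq k) := fun k => hc0 k ▸ hflag k 0 (by omega)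
  have base0 : G 0 = flagList (m+1) (Fseq 0) δ := hG0
  -- the master formula
  have inner : ∀ k, G (k * (m+1)) = flagList (m+1) (Fseq k) δ →
      ∀ i, i ≤ m + 1 → G (k * (m+1) + i) = flagList (m+1) (c k i) (δ * (finRotate (m+1)) ^ i) := by
    intro k hbase i
    induction i with
    | zero =>
      intro _
      simpa [hc0 k] using hbase
    | succ i ih =>
      intro hi
      have hGi := ih (by omega)
      have hT := hTs (k * (m+1) + i)
      rw [hGi] at hT
      obtain ⟨F', hsig, hS'⟩ := tstep_decomp hΔ (by omega) (hflag k i (by omega)) hT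
      have h0 : (((finRotate (m+1)) ^ i) ⟨0, by omega⟩ : Fin (m+1)) = ⟨i, by omega⟩ := by
        rw [Fin.mk_zero, finRotate_pow_apply, zero_add]
        apply Fin.ext
        exact Fin.val_cast_of_lt (by omega)
      have hval : (((δ * (finRotate (m+1)) ^ i) ⟨0, by omega⟩ : Fin (m+1)) : ℕ)
          = ((δ ⟨i, by omega⟩ : Fin (m+1)) : ℕ) := by
        rw [Equiv.Perm.mul_apply, h0]
      rw [hval] at hsig
      have hF' : F' = c k (i + 1) :=
        sigma_unique hΔ (Fin.isLt _) hsig (hcs k ⟨i, by omega⟩)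
      show G (k * (m+1) + i + 1) = _
      rw [hS', hF']
      congr 1
      rw [pow_succ, mul_assoc]
  have base : ∀ k, G (k * (m+1)) = flagList (m+1) (Fseq k) δ := by
    intro k
    induction k with
    | zero => rw [Nat.zero_mul]; exact base0
    | succ k ih =>
      have h1 := inner k ih (m+1) le_rfl
      rw [hcn k, finRotate_pow_self, mul_one] at h1
      have hidx : k * (m+1) + (m+1) = (k+1) * (m+1) := by ring
      rw [hidx] at h1
      exact h1
  have master : ∀ k i, i ≤ m + 1 →
      G (k * (m+1) + i) = flagList (m+1) (c k i) (δ * (finRotate (m+1)) ^ i) :=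
    fun k => inner k (base k)
  -- head formula
  have headf : ∀ (k : ℕ) (i : Fin (m+1)),
      (G (k * (m+1) + (i : ℕ))).head? = some (((Fseq k).take ((δ i : ℕ) + 1)).toFinset) := by
    intro k i
    rw [master k (i : ℕ) (by omega), flagList_head?]
    have h0 : ((δ * (finRotate (m+1)) ^ (i : ℕ)) 0 : Fin (m+1)) = δ i := by
      rw [Equiv.Perm.mul_apply, finRotate_pow_apply, zero_add, Fin.cast_val_eq_self]
    rw [h0]
    congr 1
    have := chain_unchanged (hcs k) (i : ℕ) (by omega) ((δ i : ℕ)) (Fin.isLt _)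
      (fun r hri hre => by
        have : δ r = δ i := Fin.ext hre
        have : r = i := δ.injective this
        omega)
    rw [this, hc0 k]
  refine ⟨?_, headf⟩
  -- determinism
  have decomp : ∀ x : ℕ, ∃ q r : ℕ, r < m + 1 ∧ x = q * (m+1) + r ∧
      G x = flagList (m+1) (c q r) (δ * (finRotate (m+1)) ^ r) := by
    intro x
    refine ⟨x / (m+1), x % (m+1), Nat.mod_lt _ (by omega), ?_, ?_⟩
    · rw [Nat.mul_comm]
      exact (Nat.div_add_mod x (m+1)).symm
    · have h1 := master (x / (m+1)) (x % (m+1)) (le_of_lt (Nat.mod_lt _ (by omega)))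
      have hx : x / (m+1) * (m+1) + x % (m+1) = x := by
        rw [Nat.mul_comm]
        exact Nat.div_add_mod x (m+1)
      rw [hx] at h1
      exact h1
  have hdet : ∀ x y : ℕ, G x = G y → G (x + 1) = G (y + 1) := by
    intro x y hxy
    obtain ⟨q, r, hrlt, hx, hGx⟩ := decomp x
    have hTx := hTs x
    have hTy := hTs y
    rw [hGx] at hTx
    rw [← hxy, hGx] at hTy
    obtain ⟨F1, hs1, he1⟩ := tstep_decomp hΔ (by omega) (hflag q r (by omega)) hTx
    obtain ⟨F2, hs2, he2⟩ := tstep_decomp hΔ (by omega) (hflag q r (by omega)) hTy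
    have hF12 : F1 = F2 := sigma_unique hΔ (Fin.isLt _) hs1 hs2
    rw [he1, he2, hF12]
  have hper_nl : ∀ x : ℕ, G (x + (m+1) * l) = G x := by
    intro x
    induction x with
    | zero =>
      have h1 := base l
      have h2 : Fseq l = Fseq 0 := by simpa using hper 0
      have h3 : (0 : ℕ) + (m+1) * l = l * (m+1) := by ring
      rw [h3, h1, h2, ← base0]
    | succ x ih =>
      have := hdet (x + (m+1) * l) x ih
      have hidx : x + 1 + (m+1) * l = x + (m+1) * l + 1 := by omega
      rw [hidx]
      exact this
  have hLle : L ≤ (m+1) * l := hMin ((m+1) * l) (by positivity) hper_nl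
  -- n divides L
  obtain ⟨q, r, hrlt, hLeq, hGL⟩ := decomp L
  have hGL0 : G L = G 0 := by simpa using hPer 0
  have hr0 : r = 0 := by
    have h1 : (flagList (m+1) (c q r) (δ * (finRotate (m+1)) ^ r)).head?
        = (flagList (m+1) (Fseq 0) δ).head? := by
      rw [← hGL, ← base0, hGL0]
    rw [flagList_head?, flagList_head?] at h1
    have h2 := Option.some.inj h1
    have hcq : IsFlag (m+1) faces (c q r) := hflag q r (by omega)
    have hc1 : (((c q r).take ((((δ * (finRotate (m+1)) ^ r) 0 : Fin (m+1)) : ℕ) + 1)).toFinset).card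
        = (((δ * (finRotate (m+1)) ^ r) 0 : Fin (m+1)) : ℕ) + 1 :=
      take_toFinset_card _ hcq.2.1 (by rw [hcq.1]; exact Nat.succ_le_of_lt (Fin.isLt _))
    have hc2 : (((Fseq 0).take (((δ 0 : Fin (m+1)) : ℕ) + 1)).toFinset).card
        = ((δ 0 : Fin (m+1)) : ℕ) + 1 :=
      take_toFinset_card _ (hFflag 0).2.1 (by rw [(hFflag 0).1]; exact Nat.succ_le_of_lt (Fin.isLt _))
    rw [h2, hc2] at hc1
    have h3 : ((δ * (finRotate (m+1)) ^ r) 0 : Fin (m+1)) = δ 0 := Fin.ext (by omega)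
    rw [Equiv.Perm.mul_apply, finRotate_pow_apply, zero_add] at h3
    have h4 : ((r : ℕ) : Fin (m+1)) = 0 := δ.injective h3
    have h5 := congrArg Fin.val h4
    rw [Fin.val_cast_of_lt hrlt] at h5
    simpa using h5
  subst hr0
  rw [Nat.add_zero] at hLeq
  have hq : 0 < q := by
    rcases Nat.eq_zero_or_pos q with h | h
    · subst h; simp at hLeq; omega
    · exact h
  have hFper : ∀ k : ℕ, Fseq (k + q) = Fseq k := by
    intro k
    have h1 := hPer (k * (m+1))
    rw [hLeq] at h1
    have hidx : k * (m+1) + q * (m+1) = (k + q) * (m+1) := by ring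
    rw [hidx] at h1
    rw [base (k+q), base k] at h1
    exact flagList_inj (hFflag (k+q)).1 (hFflag k).1 (hFflag (k+q)).2.1 (hFflag k).2.1 δ h1
  have hlq : l ≤ q := hmin q hq hFper
  have hql : q ≤ l := by
    have : q * (m+1) ≤ (m+1) * l := hLeq ▸ hLle
    have h2 : (m+1) * q ≤ (m+1) * l := by rw [Nat.mul_comm (m+1) q]; exact this
    exact Nat.le_of_mul_le_mul_left h2 (by omega)
  have : q = l := le_antisymm hql hlq
  rw [hLeq, this]
  ring
end

section
/- Let Δ be a thin chamber complex of rank n and k ∈ {1,...,n-2}. If X and Y are weakly adjacent k-faces of Δ (their intersection is a (k-1)-face and no face of Δ contains both), then no simple zigzag connects X and Y; that is, there is no simple zigzag such that both X and Y occur as k-faces of flags in the zigzag. -/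
open scoped Classical

variable {V : Type*}

/-- Weakly adjacent `k`-faces (`1 ≤ k ≤ n - 2`; intersection a `(k-1)`-face, no
face containing both) of a thin chamber complex cannot be connected by a simple zigzag. -/
theorem stmt18 [Fintype V] (n : ℕ) (faces : Finset V → Prop) (hΔ : IsThinComplex n faces)
    (hconn : ChamberConnected n faces) (k : ℕ) (hk1 : 1 ≤ k) (hk2 : k ≤ n - 2)
    (X Y : Finset V) (hXf : faces X) (hYf : faces Y)
    (hXc : X.card = k + 1) (hYc : Y.card = k + 1)
    (hint : (X ∩ Y).card = k) (hnoface : ¬ ∃ Z : Finset V, faces Z ∧ X ⊆ Z ∧ Y ⊆ Z) :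
    ¬ ∃ (l : ℕ) (F : ℕ → List V), IsZigzag n faces l F ∧
      (∀ i : ℕ, i < l → ∀ j : ℕ, j < l → (F i).head? = (F j).head? → i = j) ∧
      (∃ i : ℕ, ((F i).take (k + 1)).toFinset = X) ∧
      (∃ j : ℕ, ((F j).take (k + 1)).toFinset = Y) := by

  rintro ⟨l, F, ⟨hl, hstep, hper, -⟩, hs, ⟨i, hXeq⟩, ⟨j, hYeq⟩⟩
  have hn3 : 3 ≤ n := by omega
  have hkn : k + 2 ≤ n := by omega
  have hflag : ∀ m, IsFlag n faces (F m) := fun m => (hstep m).1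
  have hlen : ∀ m, (F m).length = n := fun m => (hflag m).1
  have hne : ∀ m, F m ≠ [] := by
    intro m h
    have := hlen m
    rw [h] at this
    simp at this
    omega
  -- the vertex sequence of the zigzag
  set x : ℕ → V := fun m => (F m).head (hne m) with hxdef
  have hhead : ∀ m, (F m).head? = some (x m) := fun m => List.head?_eq_head (hne m)
  -- entries of the flags
  have hget : ∀ t m, t < n → (F m)[t]? = some (x (m + t)) := by
    intro t
    induction t with
    | zero =>
      intro m ht
      rw [← List.head?_eq_getElem?, hhead]
      rfl
    | succ t ih =>
      intro m ht
      obtain ⟨-, -, y, hG, -⟩ := hstep m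
      have h1 : (F (m + 1))[t]? = some (x (m + 1 + t)) := ih (m + 1) (by omega)
      rw [hG, List.getElem?_append] at h1
      have hlt : t < (F m).tail.length := by
        rw [List.length_tail, hlen]; omega
      rw [if_pos hlt, List.getElem?_tail] at h1
      rw [h1]
      congr 2
      omega
  -- periodicity of F
  have hFadd : ∀ q m, F (m + l * q) = F m := by
    intro q
    induction q with
    | zero => intro m; simp
    | succ q ih =>
      intro m
      have : m + l * (q + 1) = (m + l * q) + l := by ring
      rw [this, hper, ih]
  have hFmod : ∀ a, F a = F (a % l) := by
    intro a
    conv_lhs => rw [← Nat.mod_add_div a l, hFadd]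
  -- the vertex sequence is l-periodic with distinct values over a period
  have hx_mod : ∀ a, x a = x (a % l) := by
    intro a
    have h : (F a).head? = (F (a % l)).head? := by rw [hFmod a]
    rw [hhead, hhead] at h
    exact Option.some.inj h
  have hx_eq : ∀ a b, a ≡ b [MOD l] → x a = x b := by
    intro a b h
    rw [hx_mod a, hx_mod b]
    exact congrArg x h
  have hx_inj : ∀ a b, x a = x b → a ≡ b [MOD l] := by
    intro a b h
    have ha : a % l < l := Nat.mod_lt _ hl
    have hb : b % l < l := Nat.mod_lt _ hl
    refine hs _ ha _ hb ?_
    rw [hhead, hhead, ← hx_mod, ← hx_mod, h]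
  have hnl : n ≤ l := by
    by_contra h
    push_neg at h
    have h1 : (F 0)[l]? = some (x l) := by
      have := hget l 0 h
      simpa using this
    have h2 : (F 0)[0]? = some (x 0) := by
      have := hget 0 0 (by omega)
      simpa using this
    have hx0 : x l = x 0 := hx_eq _ _ (by simp [Nat.ModEq])
    rw [hx0, ← h2] at h1
    have := (List.getElem?_inj (by rw [hlen]; omega) (hflag 0).2.1).mp h1
    omega
  -- explicit description of the flags
  have hFm : ∀ m, F m = (List.range n).map (fun t => x (m + t)) := by
    intro m
    refine List.ext_getElem? fun t => ?_
    by_cases ht : t < n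
    · rw [hget t m ht, List.getElem?_map, List.getElem?_range ht]
      rfl
    · rw [List.getElem?_eq_none, List.getElem?_eq_none]
      · simp; omega
      · rw [hlen]; omega
  have hmem_take : ∀ m b, b ∈ ((F m).take (k + 1)).toFinset ↔ ∃ t, t ≤ k ∧ x (m + t) = b := by
    intro m b
    rw [hFm m, ← List.map_take, List.take_range, List.mem_toFinset, List.mem_map]
    constructor
    · rintro ⟨t, ht, rfl⟩
      rw [List.mem_range] at ht
      exact ⟨t, by omega, rfl⟩
    · rintro ⟨t, ht, rfl⟩
      exact ⟨t, by rw [List.mem_range]; omega, rfl⟩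
  have hmemX : ∀ b, b ∈ X ↔ ∃ t, t ≤ k ∧ x (i + t) = b := by
    intro b; rw [← hXeq]; exact hmem_take i b
  have hmemY : ∀ b, b ∈ Y ↔ ∃ t, t ≤ k ∧ x (j + t) = b := by
    intro b; rw [← hYeq]; exact hmem_take j b
  -- main containment helper
  have hsub : ∀ (m a : ℕ) (Z : Finset V),
      (∀ b, b ∈ Z ↔ ∃ t, t ≤ k ∧ x (a + t) = b) →
      (∀ t, t ≤ k → ∃ t', t' < n ∧ m + t' ≡ a + t [MOD l]) →
      Z ⊆ (F m).toFinset := by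
    intro m a Z hZ hT b hb
    obtain ⟨t, htk, hxb⟩ := (hZ b).mp hb
    obtain ⟨t', ht'n, hcong⟩ := hT t htk
    rw [List.mem_toFinset]
    have hxb' : x (m + t') = b := (hx_eq _ _ hcong).trans hxb
    exact List.mem_of_getElem? (by rw [hget t' m ht'n, hxb'])
  have hdone : ∀ m : ℕ, X ⊆ (F m).toFinset → Y ⊆ (F m).toFinset → False := by
    intro m hX hY
    exact hnoface ⟨(F m).toFinset, (hflag m).2.2, hX, hY⟩
  -- the unique element of Y \ X
  have hYX1 : (Y \ X).card = 1 := by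
    have h := Finset.card_sdiff_add_card_inter Y X
    rw [Finset.inter_comm, hint, hYc] at h
    omega
  obtain ⟨b0, hb0⟩ := Finset.card_eq_one.mp hYX1
  have hb0mem : b0 ∈ Y \ X := by rw [hb0]; exact Finset.mem_singleton_self b0
  obtain ⟨hb0Y, hb0X⟩ := Finset.mem_sdiff.mp hb0mem
  obtain ⟨t0, ht0k, ht0eq⟩ := (hmemY b0).mp hb0Y
  have ht0X : x (j + t0) ∉ X := by rw [ht0eq]; exact hb0X
  have hXmem_of : ∀ t, t ≤ k → t ≠ t0 → x (j + t) ∈ X := by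
    intro t ht hne'
    by_contra hnot
    have hYmem : x (j + t) ∈ Y := (hmemY _).mpr ⟨t, ht, rfl⟩
    have : x (j + t) ∈ Y \ X := Finset.mem_sdiff.mpr ⟨hYmem, hnot⟩
    rw [hb0] at this
    have heq : x (j + t) = x (j + t0) := by
      rw [Finset.mem_singleton.mp this, ← ht0eq]
    have hmod : j + t ≡ j + t0 [MOD l] := hx_inj _ _ heq
    have hc : t ≡ t0 [MOD l] := Nat.ModEq.add_left_cancel' j hmod
    have : t % l = t0 % l := hc
    rw [Nat.mod_eq_of_lt (by omega), Nat.mod_eq_of_lt (by omega)] at this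
    exact hne' this
  -- three possible cases
  have hcase : (i + 1 ≡ j [MOD l]) ∨ (j + 1 ≡ i [MOD l]) ∨ l = n := by
    rcases Nat.lt_trichotomy t0 k with htlt | hrest
    · rcases Nat.eq_zero_or_pos t0 with ht00 | ht0p
      · -- t0 = 0 : derive j + 1 ≡ i
        subst ht00
        have h1X : x (j + 1) ∈ X := hXmem_of 1 hk1 (by omega)
        obtain ⟨s, hsk, hseq⟩ := (hmemX _).mp h1X
        have hc : i + s ≡ j + 1 [MOD l] := hx_inj _ _ hseq
        rcases Nat.eq_zero_or_pos s with hs0 | hsp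
        · subst hs0; right; left; exact hc.symm
        · exfalso
          obtain ⟨s', rfl⟩ : ∃ s', s = s' + 1 := ⟨s - 1, by omega⟩
          have : i + s' ≡ j [MOD l] := by
            refine Nat.ModEq.add_right_cancel' 1 ?_
            have e : i + s' + 1 = i + (s' + 1) := by ring
            rw [e]; exact hc
          have : x (j + 0) ∈ X := by
            refine (hmemX _).mpr ⟨s', by omega, ?_⟩
            rw [Nat.add_zero]
            exact hx_eq _ _ this
          exact ht0X this
      · -- 0 < t0 < k : derive l = n
        right; right
        -- downward neighbor
        obtain ⟨t1, rfl⟩ : ∃ t1, t0 = t1 + 1 := ⟨t0 - 1, by omega⟩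
        have hdX : x (j + t1) ∈ X := hXmem_of t1 (by omega) (by omega)
        obtain ⟨s, hsk, hseq⟩ := (hmemX _).mp hdX
        have hcd : i + s ≡ j + t1 [MOD l] := hx_inj _ _ hseq
        have hsK : s = k := by
          by_contra hsne
          have : x (j + (t1 + 1)) ∈ X := by
            refine (hmemX _).mpr ⟨s + 1, by omega, ?_⟩
            refine hx_eq _ _ ?_
            have e1 : i + (s + 1) = (i + s) + 1 := by ring
            have e2 : j + (t1 + 1) = (j + t1) + 1 := by ring
            rw [e1, e2]
            exact hcd.add_right 1
          exact ht0X this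
        rw [hsK] at hcd
        -- upward neighbor
        have huX : x (j + (t1 + 2)) ∈ X := hXmem_of (t1 + 2) (by omega) (by omega)
        obtain ⟨s', hs'k, hs'eq⟩ := (hmemX _).mp huX
        have hcu : i + s' ≡ j + (t1 + 2) [MOD l] := hx_inj _ _ hs'eq
        have hs0 : s' = 0 := by
          by_contra hs'ne
          obtain ⟨s'', rfl⟩ : ∃ s'', s' = s'' + 1 := ⟨s' - 1, by omega⟩
          have : x (j + (t1 + 1)) ∈ X := by
            refine (hmemX _).mpr ⟨s'', by omega, ?_⟩
            refine hx_eq _ _ ?_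
            refine Nat.ModEq.add_right_cancel' 1 ?_
            have e1 : i + s'' + 1 = i + (s'' + 1) := by ring
            have e2 : j + (t1 + 1) + 1 = j + (t1 + 2) := by ring
            rw [e1, e2]
            exact hcu
          exact ht0X this
        rw [hs0] at hcu
        rw [Nat.add_zero] at hcu
        -- combine: l divides k + 2
        have h1 : i + k + 1 ≡ j + (t1 + 1) [MOD l] := by
          have e1 : i + k + 1 = (i + k) + 1 := rfl
          have e2 : j + (t1 + 1) = (j + t1) + 1 := by ring
          rw [e1, e2]
          exact hcd.add_right 1
        have h2 : i + k + 2 ≡ i + 0 [MOD l] := by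
          have e : i + k + 2 = (i + k + 1) + 1 := by ring
          rw [e, Nat.add_zero]
          calc (i + k + 1) + 1 ≡ (j + (t1 + 1)) + 1 [MOD l] := h1.add_right 1
            _ = j + (t1 + 2) := by ring
            _ ≡ i + 0 [MOD l] := by rw [Nat.add_zero]; exact hcu.symm
        have hdvd : l ∣ k + 2 := by
          have : k + 2 ≡ 0 [MOD l] := Nat.ModEq.add_left_cancel' i (by
            have e : i + (k + 2) = i + k + 2 := by ring
            rw [e]; exact h2)
          exact Nat.modEq_zero_iff_dvd.mp this
        have : l ≤ k + 2 := Nat.le_of_dvd (by omega) hdvd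
        omega
    · -- t0 = k : derive i + 1 ≡ j
      have ht0K : t0 = k := by omega
      rw [ht0K] at ht0X
      left
      obtain ⟨k1, hk1e⟩ : ∃ k1, k = k1 + 1 := ⟨k - 1, by omega⟩
      have hdX : x (j + k1) ∈ X := hXmem_of k1 (by omega) (by omega)
      obtain ⟨s, hsk, hseq⟩ := (hmemX _).mp hdX
      have hcd : i + s ≡ j + k1 [MOD l] := hx_inj _ _ hseq
      have hsK : s = k := by
        by_contra hsne
        have : x (j + k) ∈ X := by
          refine (hmemX _).mpr ⟨s + 1, by omega, ?_⟩
          refine hx_eq _ _ ?_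
          have e1 : i + (s + 1) = (i + s) + 1 := by ring
          have e2 : j + k = (j + k1) + 1 := by rw [hk1e]; ring
          rw [e1, e2]
          exact hcd.add_right 1
        exact ht0X this
      rw [hsK] at hcd
      refine Nat.ModEq.add_right_cancel' k ?_
      have e1 : i + 1 + k = (i + k) + 1 := by ring
      have e2 : j + k = (j + k1) + 1 := by rw [hk1e]; ring
      rw [e1, e2]
      exact hcd.add_right 1
  -- finish in each case
  rcases hcase with hij | hji | hln
  · refine hdone i (hsub i i X hmemX ?_) (hsub i j Y hmemY ?_)
    · intro t ht; exact ⟨t, by omega, Nat.ModEq.refl _⟩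
    · intro t ht
      refine ⟨t + 1, by omega, ?_⟩
      have e : i + (t + 1) = (i + 1) + t := by ring
      rw [e]
      exact hij.add_right t
  · refine hdone j (hsub j i X hmemX ?_) (hsub j j Y hmemY ?_)
    · intro t ht
      refine ⟨t + 1, by omega, ?_⟩
      have e : j + (t + 1) = (j + 1) + t := by ring
      rw [e]
      exact hji.add_right t
    · intro t ht; exact ⟨t, by omega, Nat.ModEq.refl _⟩
  · refine hdone i (hsub i i X hmemX ?_) (hsub i j Y hmemY ?_)
    · intro t ht; exact ⟨t, by omega, Nat.ModEq.refl _⟩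
    · intro t ht
      refine ⟨(j + t + (l - 1) * i) % l, by
        have := Nat.mod_lt (j + t + (l - 1) * i) hl
        omega, ?_⟩
      calc i + (j + t + (l - 1) * i) % l
          ≡ i + (j + t + (l - 1) * i) [MOD l] := Nat.ModEq.add_left i (Nat.mod_modEq _ l)
        _ = j + t + l * i := by
            have : (l - 1) * i + i = l * i := by
              have : (l - 1) + 1 = l := by omega
              calc (l - 1) * i + i = ((l - 1) + 1) * i := by ring
                _ = l * i := by rw [this]
            omega
        _ ≡ j + t [MOD l] := by
            show (j + t + l * i) % l = (j + t) % l
            simp [Nat.add_mul_mod_self_left, Nat.mul_comm]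
end

section
/- Let Δ be a z-simple thin chamber complex of rank n ≥ 3 such that any two edges of Δ are z-connected (some zigzag contains both as 1-faces of its flags). Then Δ is 3-neighborly: every 3-element subset of the vertex set is a face. More generally, if there is 1 ≤ k < n-1 such that any two faces of the same rank r are z-connected for every 1 ≤ r ≤ k, then Δ is (k+2)-neighborly. -/
open scoped Classical

variable {V : Type*}

/-- The complex is `z`-simple: in every zigzag, the vertices in one period of the 0-shadow are
pairwise distinct. -/
def ZSimple (n : ℕ) (faces : Finset V → Prop) : Prop :=
  ∀ (l : ℕ) (F : ℕ → List V), IsZigzag n faces l F →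
    ∀ i : ℕ, i < l → ∀ j : ℕ, j < l → (F i).head? = (F j).head? → i = j

/-- Faces `X` and `Y` are `z`-connected: some zigzag contains both among the faces of its
flags. -/
def ZConnected (n : ℕ) (faces : Finset V → Prop) (X Y : Finset V) : Prop :=
  ∃ (l : ℕ) (F : ℕ → List V), IsZigzag n faces l F ∧
    (∃ (i r : ℕ), ((F i).take r).toFinset = X) ∧
    (∃ (j r : ℕ), ((F j).take r).toFinset = Y)

theorem zsimple_union (n : ℕ) (faces : Finset V → Prop) (hΔ : IsThinComplex n faces)
    (hsimple : ZSimple n faces) (r : ℕ) (hr : 1 ≤ r) (hrn : r + 2 ≤ n)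
    (X Y : Finset V) (hXc : X.card = r + 1) (hYc : Y.card = r + 1)
    (hXYc : (X ∩ Y).card = r) (hzcon : ZConnected n faces X Y) : faces (X ∪ Y) := by
  obtain ⟨l, F, hzig, ⟨i0, a, hXa⟩, ⟨j0, b, hYb⟩⟩ := hzcon
  obtain ⟨hl, hstep, hper, hmin⟩ := hzig
  have hflag : ∀ t, IsFlag n faces (F t) := fun t => (hstep t).1
  have hlen : ∀ t, (F t).length = n := fun t => (hflag t).1
  have hnd : ∀ t, (F t).Nodup := fun t => (hflag t).2.1
  have hfc : ∀ t, faces (F t).toFinset := fun t => (hflag t).2.2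
  have hn0 : 0 < n := by omega
  obtain ⟨v0, hv0⟩ : X.Nonempty := Finset.card_pos.mp (by omega)
  haveI : Inhabited V := ⟨v0⟩
  obtain ⟨x, hxdef⟩ : ∃ x : ℕ → V, ∀ t, x t = (F t).headI := ⟨_, fun _ => rfl⟩
  have hne : ∀ t, F t ≠ [] := by
    intro t h
    have h2 := hlen t
    rw [h] at h2
    simp at h2
    omega
  have hhead : ∀ t, (F t).head? = some (x t) := by
    intro t
    rw [hxdef t]
    rcases hFt : F t with _ | ⟨c, tl⟩
    · exact absurd hFt (hne t)
    · rfl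
  have hget0 : ∀ t, (F t)[0]? = some (x t) := by
    intro t
    rw [hxdef t]
    rcases hFt : F t with _ | ⟨c, tl⟩
    · exact absurd hFt (hne t)
    · simp
  have hget : ∀ m t, m < n → (F t)[m]? = some (x (t + m)) := by
    intro m
    induction m with
    | zero => intro t _; simpa using hget0 t
    | succ m ih =>
      intro t hm
      obtain ⟨-, -, y, hy, -⟩ := hstep t
      have h1 := ih (t + 1) (by omega)
      rw [hy, List.getElem?_append_left (by rw [List.length_tail, hlen t]; omega),
        List.getElem?_tail] at h1
      rw [show t + (m + 1) = t + 1 + m from by omega]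
      exact h1
  have hFq : ∀ q t, F (t + q * l) = F t := by
    intro q
    induction q with
    | zero => intro t; simp
    | succ q ih =>
      intro t
      rw [show t + (q + 1) * l = (t + q * l) + l from by ring, hper, ih]
  have hFmod : ∀ t, F t = F (t % l) := by
    intro t
    conv_lhs => rw [show t = t % l + t / l * l from (Nat.mod_add_div' t l).symm]
    exact hFq (t / l) (t % l)
  have hxe : ∀ s t, s % l = t % l → x s = x t := by
    intro s t h
    rw [hxdef s, hxdef t, hFmod s, hFmod t, h]
  have hxinj : ∀ s t, x s = x t → s % l = t % l := by
    intro s t h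
    refine hsimple l F ⟨hl, hstep, hper, hmin⟩ (s % l) (Nat.mod_lt s hl) (t % l)
      (Nat.mod_lt t hl) ?_
    rw [hhead, hhead, hxe (s % l) s (Nat.mod_eq_of_lt (Nat.mod_lt s hl)),
      hxe (t % l) t (Nat.mod_eq_of_lt (Nat.mod_lt t hl)), h]
  have hnl : n ≤ l := by
    by_contra hc
    push_neg at hc
    have h1 : (F 0)[l]? = some (x l) := by simpa using hget l 0 hc
    have h2 : (F 0)[0]? = (F 0)[l]? := by
      rw [hget0 0, h1, hxe l 0 (by simp [Nat.mod_self])]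
    have := (List.getElem?_inj (by rw [hlen]; omega) (hnd 0)).mp h2
    omega
  have htake : ∀ t m, m ≤ n → (F t).take m = (List.range m).map (fun s => x (t + s)) := by
    intro t m
    induction m with
    | zero => intro _; simp
    | succ m ih =>
      intro hm
      rw [List.take_succ, ih (by omega), hget m t (by omega), List.range_succ,
        List.map_append]
      simp
  have hXcard_take : ∀ (t c : ℕ), ((F t).take c).toFinset.card = min c n := by
    intro t c
    rw [List.toFinset_card_of_nodup ((hnd t).sublist (List.take_sublist c (F t))),
      List.length_take, hlen]
  have hxx : ∀ t s : ℕ, x (t % l + s) = x (t + s) := fun t s => hxe _ _ (Nat.mod_add_mod t l s)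
  have harc : ∀ t c, c ≤ n → ((F t).take c).toFinset
      = (Finset.range c).image (fun s => x (t % l + s)) := by
    intro t c hc
    rw [htake t c hc]
    ext w
    simp only [List.mem_toFinset, List.mem_map, List.mem_range, Finset.mem_image,
      Finset.mem_range]
    constructor
    · rintro ⟨s, hs, rfl⟩; exact ⟨s, hs, hxx t s⟩
    · rintro ⟨s, hs, rfl⟩; exact ⟨s, hs, (hxx t s).symm⟩
  have ha : a = r + 1 := by
    have := hXcard_take i0 a
    rw [hXa, hXc] at this
    omega
  have hb : b = r + 1 := by
    have := hXcard_take j0 b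
    rw [hYb, hYc] at this
    omega
  subst ha hb
  rw [harc i0 _ (by omega)] at hXa
  rw [harc j0 _ (by omega)] at hYb
  have hmemF : ∀ t s, s < n → x (t + s) ∈ (F t).toFinset :=
    fun t s hs => List.mem_toFinset.mpr (List.mem_of_getElem? (hget s t hs))
  have hrl : r + 2 ≤ l := le_trans hrn hnl
  have hinj : ∀ s s' : ℕ, s < l → s' < l → ∀ t, x (t + s) = x (t + s') → s = s' := by
    intro s s' hs hs' t h
    have h2 : s % l = s' % l := Nat.ModEq.add_left_cancel' t (hxinj _ _ h)
    rw [Nat.mod_eq_of_lt hs, Nat.mod_eq_of_lt hs'] at h2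
    exact h2
  have main : ∀ i j : ℕ, j < l → i ≤ j →
      ((Finset.range (r+1)).image (fun s => x (i + s)) ∩
        (Finset.range (r+1)).image (fun s => x (j + s))).card = r →
      faces ((Finset.range (r+1)).image (fun s => x (i + s)) ∪
        (Finset.range (r+1)).image (fun s => x (j + s))) := by
    intro i j hjl hij hcard
    set d := j - i with hd
    have hjd : j = i + d := by omega
    have hdl : d < l := by omega
    set T := (Finset.range (r+1)).filter (fun m => d ≤ m ∨ m + l ≤ d + r) with hT
    have hTeq : (Finset.range (r+1)).image (fun s => x (i + s)) ∩
        (Finset.range (r+1)).image (fun s => x (j + s)) = T.image (fun s => x (i + s)) := by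
      ext w
      simp only [Finset.mem_inter, Finset.mem_image, Finset.mem_range, hT, Finset.mem_filter]
      constructor
      · rintro ⟨⟨m, hm, rfl⟩, ⟨m', hm', he⟩⟩
        refine ⟨m, ⟨hm, ?_⟩, rfl⟩
        have hmod := hxinj _ _ he
        rw [hjd] at hmod
        have h2 : (d + m') % l = m % l :=
          Nat.ModEq.add_left_cancel' i (by rw [show i + (d + m') = i + d + m' from by omega]; exact hmod)
        have hm2 : m % l = m := Nat.mod_eq_of_lt (by omega)
        rcases Nat.lt_or_ge (d + m') l with hlt | hge
        · rw [Nat.mod_eq_of_lt hlt, hm2] at h2; omega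
        · have h3 : (d + m') % l = d + m' - l := by
            rw [Nat.mod_eq_sub_mod hge, Nat.mod_eq_of_lt (by omega)]
          rw [h3, hm2] at h2; omega
      · rintro ⟨m, ⟨hm, hcase⟩, rfl⟩
        refine ⟨⟨m, hm, rfl⟩, ?_⟩
        rcases hcase with hc | hc
        · exact ⟨m - d, by omega, by rw [hjd]; congr 1; omega⟩
        · refine ⟨m + l - d, by omega, ?_⟩
          rw [show j + (m + l - d) = i + m + l from by omega]
          exact hxe _ _ (by rw [Nat.add_mod_right])
    have hTcard : T.card = r := by
      have hinj' : Set.InjOn (fun s => x (i + s)) T := by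
        intro s hs s' hs' he
        simp only [hT, Finset.coe_filter, Set.mem_setOf_eq, Finset.mem_range] at hs hs'
        exact hinj s s' (by omega) (by omega) i he
      rw [← hcard, hTeq, Finset.card_image_of_injOn hinj']
    have hdisj : Disjoint ((Finset.range (r+1)).filter (fun m => d ≤ m))
        ((Finset.range (r+1)).filter (fun m => m + l ≤ d + r)) := by
      rw [Finset.disjoint_left]
      intro m h1 h2
      simp only [Finset.mem_filter, Finset.mem_range] at h1 h2
      omega
    have hc1 : ((Finset.range (r+1)).filter (fun m => d ≤ m)).card = r + 1 - d := by
      rw [show (Finset.range (r+1)).filter (fun m => d ≤ m) = Finset.Ico d (r+1) from by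
        ext m; simp only [Finset.mem_filter, Finset.mem_range, Finset.mem_Ico]; omega,
        Nat.card_Ico]
    have hc2 : ((Finset.range (r+1)).filter (fun m => m + l ≤ d + r)).card
        = d + r + 1 - l := by
      rw [show (Finset.range (r+1)).filter (fun m => m + l ≤ d + r)
          = Finset.range (d + r + 1 - l) from by
        ext m; simp only [Finset.mem_filter, Finset.mem_range]; omega]
      exact Finset.card_range _
    have hTc2 : T.card = (r + 1 - d) + (d + r + 1 - l) := by
      rw [hT, Finset.filter_or, Finset.card_union_of_disjoint hdisj, hc1, hc2]
    have hcases : d = 1 ∨ l = d + 1 ∨ l = r + 2 := by omega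
    rcases hcases with h1 | h1 | h1
    · refine hΔ.2.1 (hfc i) ?_
      intro w hw
      rcases Finset.mem_union.mp hw with hw | hw
      · obtain ⟨s, hs, rfl⟩ := Finset.mem_image.mp hw
        exact hmemF i s (by have := Finset.mem_range.mp hs; omega)
      · obtain ⟨s, hs, rfl⟩ := Finset.mem_image.mp hw
        rw [show j + s = i + (s + 1) from by omega]
        exact hmemF i (s + 1) (by have := Finset.mem_range.mp hs; omega)
    · refine hΔ.2.1 (hfc j) ?_
      intro w hw
      rcases Finset.mem_union.mp hw with hw | hw
      · obtain ⟨s, hs, rfl⟩ := Finset.mem_image.mp hw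
        have hxeq : x (i + s) = x (j + (s + 1)) :=
          hxe _ _ (by rw [show j + (s + 1) = i + s + l from by omega, Nat.add_mod_right])
        rw [hxeq]
        exact hmemF j (s + 1) (by have := Finset.mem_range.mp hs; omega)
      · obtain ⟨s, hs, rfl⟩ := Finset.mem_image.mp hw
        exact hmemF j s (by have := Finset.mem_range.mp hs; omega)
    · have hall : ∀ t : ℕ, x t ∈ (F 0).toFinset := by
        intro t
        have hxeq : x t = x (0 + t % l) :=
          hxe _ _ (by rw [Nat.zero_add, Nat.mod_eq_of_lt (Nat.mod_lt t hl)])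
        rw [hxeq]
        exact hmemF 0 (t % l) (by have := Nat.mod_lt t hl; omega)
      refine hΔ.2.1 (hfc 0) ?_
      intro w hw
      rcases Finset.mem_union.mp hw with hw | hw
      · obtain ⟨s, hs, rfl⟩ := Finset.mem_image.mp hw; exact hall _
      · obtain ⟨s, hs, rfl⟩ := Finset.mem_image.mp hw; exact hall _
  rcases le_total (i0 % l) (j0 % l) with hij | hij
  · rw [← hXa, ← hYb]
    exact main _ _ (Nat.mod_lt j0 hl) hij (by rw [hXa, hYb]; exact hXYc)
  · rw [← hXa, ← hYb, Finset.union_comm]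
    exact main _ _ (Nat.mod_lt i0 hl) hij (by rw [hYb, hXa, Finset.inter_comm]; exact hXYc)

/-- If a `z`-simple thin chamber complex of rank `n ≥ 3` has `1 ≤ k < n - 1` such
that any two faces of the same rank `r` with `1 ≤ r ≤ k` are `z`-connected, then it is
`(k+2)`-neighborly: every `(k+2)`-element subset of the vertex set is a face. (The case `k = 1`
is: if any two edges are `z`-connected, the complex is `3`-neighborly.) -/
theorem stmt19 [Fintype V] (n : ℕ) (faces : Finset V → Prop) (hΔ : IsThinComplex n faces)
    (hconn : ChamberConnected n faces) (hn : 3 ≤ n) (hsimple : ZSimple n faces)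
    (k : ℕ) (hk1 : 1 ≤ k) (hk2 : k < n - 1)
    (hzc : ∀ r : ℕ, 1 ≤ r → r ≤ k → ∀ X Y : Finset V, faces X → faces Y →
      X.card = r + 1 → Y.card = r + 1 → ZConnected n faces X Y) :
    ∀ S : Finset V, S.card = k + 2 → faces S := by
  have hdown := hΔ.2.1
  have hsing := hΔ.1
  have hfacetC := hΔ.2.2.2.1
  have hfpair : ∀ C : Finset V, faces C → ∀ a b : V, a ∈ C → b ∈ C → faces {a, b} := by
    intro C hC a b ha hb
    exact hdown hC (by rw [Finset.insert_subset_iff, Finset.singleton_subset_iff]; exact ⟨ha, hb⟩)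
  have hclose : ∀ a b c : V, a ≠ b → b ≠ c → a ≠ c → faces {a, b} → faces {b, c} →
      faces {a, c} := by
    intro a b c hab hbc hac h1 h2
    have c1 : ({a, b} : Finset V).card = 2 := by
      rw [Finset.card_insert_of_notMem (by simp [hab]), Finset.card_singleton]
    have c2 : ({b, c} : Finset V).card = 2 := by
      rw [Finset.card_insert_of_notMem (by simp [hbc]), Finset.card_singleton]
    have ci : (({a, b} : Finset V) ∩ {b, c}).card = 1 := by
      rw [show ({a, b} : Finset V) ∩ {b, c} = {b} from by
        ext w
        simp only [Finset.mem_inter, Finset.mem_insert, Finset.mem_singleton]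
        constructor
        · rintro ⟨h3 | h3, h4 | h4⟩ <;> simp_all
        · rintro rfl; simp, Finset.card_singleton]
    have h3 := zsimple_union n faces hΔ hsimple 1 le_rfl (by omega) {a, b} {b, c} c1 c2 ci
      (hzc 1 le_rfl hk1 {a, b} {b, c} h1 h2 c1 c2)
    refine hdown h3 ?_
    intro w hw
    simp only [Finset.mem_insert, Finset.mem_singleton, Finset.mem_union] at hw ⊢
    tauto
  have hpair : ∀ u v : V, faces {u, v} := by
    intro u v
    obtain ⟨Cu, hCu, hCu2⟩ := hfacetC (hsing u)
    obtain ⟨Cv, hCv, hCv2⟩ := hfacetC (hsing v)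
    obtain ⟨m, p, hp0, hpm, hpath⟩ := hconn Cu Cv hCu hCv
    have hu : u ∈ Cu := hCu2 (Finset.mem_singleton_self u)
    have hv : v ∈ Cv := hCv2 (Finset.mem_singleton_self v)
    have hstep : ∀ t, t ≤ m → ∀ w ∈ p t, faces {u, w} := by
      intro t
      induction t with
      | zero =>
        intro _ w hw
        rw [hp0] at hw
        exact hfpair Cu hCu.1 u w hu hw
      | succ t ih =>
        intro ht w hw
        obtain ⟨hPt, hPt1, hne', hcard⟩ := hpath t (by omega)
        obtain ⟨z, hz⟩ : (p t ∩ p (t + 1)).Nonempty := Finset.card_pos.mp (by omega)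
        have hz1 : z ∈ p t := (Finset.mem_inter.mp hz).1
        have hz2 : z ∈ p (t + 1) := (Finset.mem_inter.mp hz).2
        have huz : faces {u, z} := ih (by omega) z hz1
        have hzw : faces {z, w} := hfpair (p (t + 1)) hPt1.1 z w hz2 hw
        by_cases h1 : u = w
        · subst h1
          rw [show ({u, u} : Finset V) = {u} from by simp]
          exact hsing u
        · by_cases h2 : u = z
          · rw [← h2] at hzw; exact hzw
          · by_cases h3 : z = w
            · rw [h3] at huz; exact huz
            · exact hclose u z w h2 h3 h1 huz hzw
    exact hstep m le_rfl v (by rw [hpm]; exact hv)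
  have neigh : ∀ m : ℕ, m ≤ k → ∀ S : Finset V, S.card = m + 2 → faces S := by
    intro m
    induction m with
    | zero =>
      intro _ S hS
      obtain ⟨u, v, huv, rfl⟩ := Finset.card_eq_two.mp hS
      exact hpair u v
    | succ m ih =>
      intro hm S hS
      obtain ⟨u, hu⟩ : S.Nonempty := Finset.card_pos.mp (by omega)
      have h3 : (S.erase u).Nonempty := Finset.card_pos.mp (by
        rw [Finset.card_erase_of_mem hu]; omega)
      obtain ⟨v, hv⟩ := h3
      have hvu : v ≠ u := (Finset.mem_erase.mp hv).1
      have hvS : v ∈ S := (Finset.mem_erase.mp hv).2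
      have hXc : (S.erase v).card = m + 2 := by rw [Finset.card_erase_of_mem hvS]; omega
      have hYc : (S.erase u).card = m + 2 := by rw [Finset.card_erase_of_mem hu]; omega
      have hfX : faces (S.erase v) := ih (by omega) _ hXc
      have hfY : faces (S.erase u) := ih (by omega) _ hYc
      have hic : ((S.erase v) ∩ (S.erase u)).card = m + 1 := by
        rw [show (S.erase v) ∩ (S.erase u) = (S.erase v).erase u from by
          ext w; simp only [Finset.mem_inter, Finset.mem_erase]; tauto]
        rw [Finset.card_erase_of_mem (Finset.mem_erase.mpr ⟨hvu.symm, hu⟩), hXc]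
        omega
      have hzc' := hzc (m + 1) (by omega) (by omega) _ _ hfX hfY (by omega) (by omega)
      have hfU := zsimple_union n faces hΔ hsimple (m + 1) (by omega) (by omega) _ _
        (by omega) (by omega) hic hzc'
      have hUS : (S.erase v) ∪ (S.erase u) = S := by
        ext w
        simp only [Finset.mem_union, Finset.mem_erase]
        constructor
        · rintro (⟨-, h⟩ | ⟨-, h⟩) <;> exact h
        · intro hw
          by_cases h : w = v
          · exact Or.inr ⟨by rw [h]; exact hvu, hw⟩
          · exact Or.inl ⟨h, hw⟩
      rw [← hUS]
      exact hfU
  intro S hS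
  exact neigh k le_rfl S hS
end
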